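/- arXiv:2210.00675 — 2 statements merged into one kernel-verified Lean document; each statement's English description precedes it below -/
import Mathlib

section
/- Let $C \subseteq \mathbb{R}^d$ be compact with bounded gaps $\{G_n\}_{n=1}^\infty$ (ordered by non-increasing diameter) and unbounded gap $E$. For each $n$ set $\Lambda_n := \{ i \neq n : \mathrm{diam}(G_n) \leq \mathrm{diam}(G_i) \}$. Then $\tau(C) = \inf_{n \in \mathbb{N}} \mathrm{dist}\big(G_n, \bigcup_{i \in \Lambda_n} G_i \cup E\big)/\mathrm{diam}(G_n)$. -/
open Set
open scoped ENNReal Classical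

noncomputable section

/-- `ℝ^d` with the Euclidean metric. -/
abbrev Euc (d : ℕ) := EuclideanSpace ℝ (Fin d)

/-- `G` is a gap of `C`: an (open) path-connected component of the complement of `C`. -/
def IsGap {d : ℕ} (C G : Set (Euc d)) : Prop :=
  ∃ x ∈ Cᶜ, G = {y | JoinedIn Cᶜ x y}

/-- The bounded gaps of `C`. -/
def boundedGaps {d : ℕ} (C : Set (Euc d)) : Set (Set (Euc d)) :=
  {G | IsGap C G ∧ Bornology.IsBounded G}

/-- The union of all unbounded gaps of `C` (for `d = 1` this is the union of the two
unbounded intervals; for `d ≥ 2` it is the single unbounded component). -/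
def unboundedGapsUnion {d : ℕ} (C : Set (Euc d)) : Set (Euc d) :=
  ⋃₀ {G | IsGap C G ∧ ¬ Bornology.IsBounded G}

/-- Distance between two sets, as an extended nonnegative real. -/
def setEDist {d : ℕ} (s t : Set (Euc d)) : ℝ≥0∞ :=
  ⨅ x ∈ s, EMetric.infEdist x t

/-- The Falconer–Yavicoli thickness `τ(C)` of a set `C ⊆ ℝ^d`: the infimum, over all bounded
gaps `G`, of the distance from `G` to the union of all other gaps of diameter at least
`diam G` together with the unbounded gap, divided by `diam G`.  (For bounded gaps enumerated
with non-increasing diameters this agrees with the definition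
`⨅ n, dist (Gₙ, G₁ ∪ ⋯ ∪ Gₙ₋₁ ∪ E) / diam Gₙ`.)  If `C` has no bounded gap, `τ(C)` is `∞`
when `C` has non-empty interior and `0` otherwise. -/
def thickness {d : ℕ} (C : Set (Euc d)) : ℝ≥0∞ :=
  if (boundedGaps C).Nonempty then
    ⨅ G ∈ boundedGaps C,
      setEDist G
        ((⋃₀ {G' | G' ∈ boundedGaps C ∧ G' ≠ G ∧ EMetric.diam G ≤ EMetric.diam G'})
          ∪ unboundedGapsUnion C) / EMetric.diam G
  else if (interior C).Nonempty then ⊤ else 0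

/-- The `ε`-thickness `τ_ε(C)`: infimum over bounded gaps `G` and boundary points `u` of `G`
of `dist (u, ⋃_{G' ∈ H_{ε,G}} G' ∪ E) / diam G`, where `H_{ε,G}` consists of the gaps
`G' ≠ G` with `(1-ε) diam G < diam G'`. -/
def epsThickness {d : ℕ} (ε : ℝ) (C : Set (Euc d)) : ℝ≥0∞ :=
  ⨅ G ∈ boundedGaps C, ⨅ u ∈ frontier G,
    EMetric.infEdist u
      ((⋃₀ {G' | G' ∈ boundedGaps C ∧ G' ≠ G ∧
          ENNReal.ofReal (1 - ε) * EMetric.diam G < EMetric.diam G'})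
        ∪ unboundedGapsUnion C) / EMetric.diam G

lemma setEDist_anti {d : ℕ} (s : Set (Euc d)) {t t' : Set (Euc d)} (h : t ⊆ t') :
    setEDist s t' ≤ setEDist s t :=
  iInf₂_mono fun x _ => EMetric.infEdist_anti h

lemma setEDist_comm_le {d : ℕ} (s t : Set (Euc d)) : setEDist s t ≤ setEDist t s := by
  simp only [setEDist, EMetric.infEdist]
  refine le_iInf₂ fun y hy => le_iInf₂ fun x hx => ?_
  exact le_trans (iInf₂_le x hx) (le_trans (iInf₂_le y hy) (edist_comm x y).le)

lemma setEDist_comm {d : ℕ} (s t : Set (Euc d)) : setEDist s t = setEDist t s :=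
  le_antisymm (setEDist_comm_le s t) (setEDist_comm_le t s)

lemma setEDist_union {d : ℕ} (s A B : Set (Euc d)) :
    setEDist s (A ∪ B) = setEDist s A ⊓ setEDist s B := by
  simp only [setEDist, EMetric.infEdist, EMetric.infEdist_union]
  refine le_antisymm (le_inf (iInf₂_mono fun x _ => inf_le_left)
    (iInf₂_mono fun x _ => inf_le_right)) (le_iInf₂ fun x hx => ?_)
  exact inf_le_inf (iInf₂_le x hx) (iInf₂_le x hx)

lemma setEDist_biUnion {d : ℕ} (s : Set (Euc d)) {ι : Type*} (I : Set ι)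
    (t : ι → Set (Euc d)) :
    setEDist s (⋃ i ∈ I, t i) = ⨅ i ∈ I, setEDist s (t i) := by
  simp only [setEDist, EMetric.infEdist, EMetric.infEdist_biUnion]
  exact le_antisymm (le_iInf₂ fun i hi => le_iInf₂ fun x hx =>
      le_trans (iInf₂_le x hx) (iInf₂_le i hi))
    (le_iInf₂ fun x hx => le_iInf₂ fun i hi =>
      le_trans (iInf₂_le i hi) (iInf₂_le x hx))

/-- The point of `ℝ^{2d}` whose first `d` coordinates are those of `y` and whose last `d`
coordinates are those of `z`. -/
def pairPoint {d : ℕ} (y z : Euc d) : Euc (2 * d) :=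
  WithLp.toLp 2 (fun i : Fin (2 * d) => if h : (i : ℕ) < d then y ⟨(i : ℕ), h⟩
           else z ⟨(i : ℕ) - d, by have := i.isLt; omega⟩)

/-- The product `C₁ × C₂ ⊆ ℝ^{2d}` of two subsets of `ℝ^d`. -/
def setProd {d : ℕ} (C₁ C₂ : Set (Euc d)) : Set (Euc (2 * d)) :=
  {p | ∃ y ∈ C₁, ∃ z ∈ C₂, p = pairPoint y z}

/-- The pinned distance set `Δ_x(A) = {|x - y| : y ∈ A}`. -/
def pinnedDist {m : ℕ} (x : Euc m) (A : Set (Euc m)) : Set ℝ :=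
  (fun y => dist x y) '' A

/-- The index `i` of `{1, …, d}` viewed inside `{1, …, 2d}` (first block). -/
def lo {d : ℕ} (i : Fin d) : Fin (2 * d) := ⟨(i : ℕ), by have := i.isLt; omega⟩

/-- The index `i + d` of `{1, …, 2d}` (second block). -/
def hi {d : ℕ} (i : Fin d) : Fin (2 * d) := ⟨(i : ℕ) + d, by have := i.isLt; omega⟩

/-- The map `g_{x,t} : ℝ^d → ℝ^d`, `g_{x,t}(y)_i = x_{i+d} + √(t²/d - (x_i - y_i)²)`. -/
def gMap {d : ℕ} (x : Euc (2 * d)) (t : ℝ) (y : Euc d) : Euc d :=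
  WithLp.toLp 2 (fun i => x (hi i) + Real.sqrt (t ^ 2 / (d : ℝ) - (x (lo i) - y i) ^ 2))

/-- `u` is a right endpoint of the gap `H`: a boundary point of `H` such that
`u + (ε, …, ε) ∉ H` for every `ε > 0`. -/
def IsRightEndpoint {d : ℕ} (H : Set (Euc d)) (u : Euc d) : Prop :=
  u ∈ frontier H ∧ ∀ ε > (0 : ℝ), ((WithLp.toLp 2 (fun i => u i + ε) : Euc d)) ∉ H

/-- A closed axis-parallel rectangle (box) in `ℝ^d`. -/
def IsClosedBox {d : ℕ} (R : Set (Euc d)) : Prop :=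
  ∃ a b : Fin d → ℝ, R = {y : Euc d | ∀ i, y i ∈ Set.Icc (a i) (b i)}

/-- If the bounded gaps of a compact set `C ⊆ ℝ^d` are enumerated as `G 0, G 1, …` with
non-increasing diameters, then the (order-dependent) quantity
`⨅ n, dist (Gₙ, ⋃_{i < n} Gᵢ ∪ E) / diam Gₙ` defining the thickness agrees with `τ(C)`,
i.e. with `⨅ n, dist (Gₙ, ⋃_{i ∈ Λₙ} Gᵢ ∪ E) / diam Gₙ` where
`Λₙ = {i ≠ n : diam Gₙ ≤ diam Gᵢ}`. -/
theorem thickness_eq_ordered_inf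
    {d : ℕ} (C : Set (Euc d)) (hC : IsCompact C)
    (G : ℕ → Set (Euc d))
    (hmem : ∀ n, G n ∈ boundedGaps C)
    (hinj : Function.Injective G)
    (hsurj : ∀ A ∈ boundedGaps C, ∃ n, G n = A)
    (hanti : Antitone fun n => EMetric.diam (G n)) :
    (⨅ n : ℕ, setEDist (G n)
        ((⋃ i ∈ Finset.range n, G i) ∪ unboundedGapsUnion C) / EMetric.diam (G n))
      = thickness C := by
  classical
  -- basic facts about the gaps
  have hne : ∀ n, (G n).Nonempty := by
    intro n
    obtain ⟨x, hx, hEq⟩ := (hmem n).1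
    exact ⟨x, hEq ▸ (JoinedIn.refl hx : JoinedIn Cᶜ x x)⟩
  have hopen : ∀ n, IsOpen (G n) := by
    intro n
    obtain ⟨x, hx, hEq⟩ := (hmem n).1
    have : G n = pathComponentIn Cᶜ x := hEq
    rw [this]
    exact (hC.isClosed.isOpen_compl).pathComponentIn x
  have hnt : Nontrivial (Euc d) := by
    by_contra h
    rw [not_nontrivial_iff_subsingleton] at h
    obtain ⟨x0, hx0⟩ := hne 0
    obtain ⟨x1, hx1⟩ := hne 1
    have hG01 : G 0 = G 1 := by
      ext y
      constructor
      · intro _; exact (Subsingleton.elim y x1) ▸ hx1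
      · intro _; exact (Subsingleton.elim y x0) ▸ hx0
    exact absurd (hinj hG01) (by norm_num)
  have hD0 : ∀ n, EMetric.diam (G n) ≠ 0 := by
    intro n h
    rw [EMetric.diam, EMetric.diam_eq_zero_iff] at h
    obtain ⟨x, hx⟩ := hne n
    obtain ⟨ε, hε, hball⟩ := Metric.isOpen_iff.1 (hopen n) x hx
    obtain ⟨v, hv⟩ := exists_ne (0 : Euc d)
    have hvn : (0 : ℝ) < ‖v‖ := norm_pos_iff.2 hv
    set y : Euc d := x + (ε / (2 * ‖v‖)) • v with hy
    have hyx : y ≠ x := by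
      intro hyx
      have : (ε / (2 * ‖v‖)) • v = 0 := by
        have := congrArg (fun z => z - x) hyx
        simpa [hy] using this
      rcases smul_eq_zero.1 this with h1 | h1
      · have : ε / (2 * ‖v‖) > 0 := by positivity
        exact absurd h1 this.ne'
      · exact hv h1
    have hmemball : y ∈ Metric.ball x ε := by
      rw [Metric.mem_ball, dist_eq_norm]
      have : y - x = (ε / (2 * ‖v‖)) • v := by simp [hy]
      rw [this, norm_smul]
      have h1 : ‖(ε / (2 * ‖v‖) : ℝ)‖ = ε / (2 * ‖v‖) := by
        rw [Real.norm_eq_abs, abs_of_pos (by positivity)]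
      rw [h1]
      have : ε / (2 * ‖v‖) * ‖v‖ = ε / 2 := by field_simp
      rw [this]; linarith
    exact hyx (h (hball hmemball) hx)
  have hDtop : ∀ n, EMetric.diam (G n) ≠ ⊤ := fun n => (hmem n).2.ediam_ne_top
  set E := unboundedGapsUnion C with hEdef
  set D : ℕ → ℝ≥0∞ := fun n => EMetric.diam (G n) with hDdef
  set ordered : ℕ → ℝ≥0∞ := fun n =>
    setEDist (G n) ((⋃ i ∈ Finset.range n, G i) ∪ E) / D n with hordered
  set tau : ℕ → ℝ≥0∞ := fun n =>
    setEDist (G n)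
      ((⋃₀ {G' | G' ∈ boundedGaps C ∧ G' ≠ G n ∧ EMetric.diam (G n) ≤ EMetric.diam G'})
        ∪ E) / D n with htau
  have hΛ : ∀ n, (⋃₀ {G' | G' ∈ boundedGaps C ∧ G' ≠ G n ∧
      EMetric.diam (G n) ≤ EMetric.diam G'})
      = ⋃ i ∈ {i : ℕ | i ≠ n ∧ D n ≤ D i}, G i := by
    intro n
    ext y
    simp only [mem_sUnion, mem_iUnion, mem_setOf_eq, exists_prop]
    constructor
    · rintro ⟨A, ⟨hA, hAne, hAd⟩, hy⟩
      obtain ⟨i, rfl⟩ := hsurj A hA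
      exact ⟨i, ⟨fun h => hAne (by rw [h]), hAd⟩, hy⟩
    · rintro ⟨i, ⟨hiineq, hid⟩, hy⟩
      exact ⟨G i, ⟨hmem i, fun h => hiineq (hinj h), hid⟩, hy⟩
  -- easy direction: tau n ≤ ordered n
  have key₁ : ∀ n, tau n ≤ ordered n := by
    intro n
    refine ENNReal.div_le_div_right (setEDist_anti _ ?_) _
    refine union_subset_union_left _ ?_
    refine iUnion₂_subset fun i hi => ?_
    refine subset_sUnion_of_mem ?_
    rw [Finset.mem_range] at hi
    exact ⟨hmem i, fun h => (Nat.ne_of_lt hi) (hinj h), hanti hi.le⟩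
  -- hard direction: ⨅ ordered ≤ tau n
  have key₂ : ∀ n, (⨅ k, ordered k) ≤ tau n := by
    intro n
    rw [htau]
    simp only
    rw [hΛ n, setEDist_union, setEDist_biUnion,
      ENNReal.le_div_iff_mul_le (Or.inl (hD0 n)) (Or.inl (hDtop n))]
    refine le_inf (le_iInf₂ fun i hi => ?_) ?_
    · rcases lt_or_gt_of_ne hi.1 with h | h
      · -- i < n : use ordered n
        calc (⨅ k, ordered k) * D n
            ≤ ordered n * D n := mul_le_mul_left (iInf_le _ n) _
          _ ≤ (setEDist (G n) (G i) / D n) * D n := by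
              refine mul_le_mul_left (ENNReal.div_le_div_right (setEDist_anti _ ?_) _) _
              exact subset_union_of_subset_left
                (subset_iUnion₂ (s := fun i _ => G i) i (Finset.mem_range.2 h)) _
          _ = setEDist (G n) (G i) := ENNReal.div_mul_cancel (hD0 n) (hDtop n)
      · -- n < i : use ordered i
        calc (⨅ k, ordered k) * D n
            ≤ ordered i * D n := mul_le_mul_left (iInf_le _ i) _
          _ ≤ ordered i * D i := mul_le_mul_right hi.2 _
          _ ≤ (setEDist (G i) (G n) / D i) * D i := by
              refine mul_le_mul_left (ENNReal.div_le_div_right (setEDist_anti _ ?_) _) _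
              exact subset_union_of_subset_left
                (subset_iUnion₂ (s := fun i _ => G i) n (Finset.mem_range.2 h)) _
          _ = setEDist (G i) (G n) := ENNReal.div_mul_cancel (hD0 i) (hDtop i)
          _ = setEDist (G n) (G i) := setEDist_comm _ _
    · calc (⨅ k, ordered k) * D n
          ≤ ordered n * D n := mul_le_mul_left (iInf_le _ n) _
        _ ≤ (setEDist (G n) E / D n) * D n :=
            mul_le_mul_left
              (ENNReal.div_le_div_right (setEDist_anti _ subset_union_right) _) _
        _ = setEDist (G n) E := ENNReal.div_mul_cancel (hD0 n) (hDtop n)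
  have hmain : (⨅ n, ordered n) = ⨅ n, tau n :=
    le_antisymm (le_iInf key₂) (iInf_mono key₁)
  have hthick : thickness C = ⨅ n, tau n := by
    rw [thickness, if_pos ⟨G 0, hmem 0⟩]
    refine le_antisymm (le_iInf fun n => iInf₂_le (G n) (hmem n))
      (le_iInf₂ fun H hH => ?_)
    obtain ⟨n, rfl⟩ := hsurj H hH
    exact iInf_le _ n
  rw [hthick, ← hmain]


end
end

section
/- Let $C_1, C_2 \subseteq \mathbb{R}^d$ be compact sets with $\tau(C_1) > 0$ and $\tau(C_2) > 0$. Then for every $x^1 \in C_1 \times C_2 \subseteq \mathbb{R}^{2d}$ and every integer $n \geq 2$, there exist points $x^2, \dots, x^n \in C_1 \times C_2$ such that for every coordinate $i \in \{1, \dots, 2d\}$, the real numbers $x_i^1, x_i^2, \dots, x_i^n$ are pairwise distinct. -/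
open Set
open scoped ENNReal Classical

noncomputable section

section Aux

variable {d : ℕ}

/-- In a nonempty open subset of `ℝ^d` one can find a point all of whose coordinates
avoid given finite sets. -/
lemma ball_avoid {U : Set (Euc d)} (hU : IsOpen U) (hne : U.Nonempty)
    (A : Fin d → Finset ℝ) : ∃ y ∈ U, ∀ i, y i ∉ A i := by
  obtain ⟨y, hy⟩ := hne
  obtain ⟨r, hr, hball⟩ := Metric.isOpen_iff.mp hU y hy
  have hd1 : (0 : ℝ) < (d : ℝ) + 1 := by positivity
  have hδ : 0 < r / ((d : ℝ) + 1) := by positivity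
  have hch : ∀ i : Fin d, ∃ c, c ∈ Set.Ioo (y i) (y i + r / ((d : ℝ) + 1)) ∧ c ∉ A i := by
    intro i
    have hinf : (Set.Ioo (y i) (y i + r / ((d : ℝ) + 1))).Infinite :=
      Set.Ioo_infinite (by linarith)
    obtain ⟨c, hc⟩ := (hinf.diff (A i).finite_toSet).nonempty
    exact ⟨c, hc.1, hc.2⟩
  choose c hc1 hc2 using hch
  refine ⟨(WithLp.toLp 2 c : Euc d), hball ?_, fun i => hc2 i⟩
  rw [Metric.mem_ball, EuclideanSpace.dist_eq]
  have hsum : ∑ i, dist (c i) (y i) ^ 2 ≤ (d : ℝ) * (r / ((d : ℝ) + 1)) ^ 2 := by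
    have : ∀ i ∈ Finset.univ (α := Fin d),
        dist (c i) (y i) ^ 2 ≤ (r / ((d : ℝ) + 1)) ^ 2 := by
      intro i _
      have h1 := (hc1 i).1
      have h2 := (hc1 i).2
      have : dist (c i) (y i) ≤ r / ((d : ℝ) + 1) := by
        rw [Real.dist_eq, abs_of_nonneg (by linarith)]
        linarith
      exact pow_le_pow_left₀ dist_nonneg this 2
    calc ∑ i, dist (c i) (y i) ^ 2 ≤ ∑ _i : Fin d, (r / ((d : ℝ) + 1)) ^ 2 :=
          Finset.sum_le_sum this
      _ = (d : ℝ) * (r / ((d : ℝ) + 1)) ^ 2 := by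
          rw [Finset.sum_const, Finset.card_univ, Fintype.card_fin, nsmul_eq_mul]
  refine lt_of_le_of_lt (Real.sqrt_le_sqrt hsum) ((Real.sqrt_lt' hr).mpr ?_)
  have hdlt : (d : ℝ) < ((d : ℝ) + 1) ^ 2 := by nlinarith [Nat.cast_nonneg (α := ℝ) d]
  have heq : (d : ℝ) * (r / ((d : ℝ) + 1)) ^ 2 = r ^ 2 * ((d : ℝ) / ((d : ℝ) + 1) ^ 2) := by
    field_simp
  rw [heq]
  calc r ^ 2 * ((d : ℝ) / ((d : ℝ) + 1) ^ 2) < r ^ 2 * 1 := by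
        refine mul_lt_mul_of_pos_left ?_ (pow_pos hr 2)
        rw [div_lt_one (by positivity)]
        exact hdlt
    _ = r ^ 2 := mul_one _

/-- If some bounded gap has points arbitrarily close to the relevant union of other gaps,
then the thickness vanishes. -/
lemma thickness_eq_zero_of {C : Set (Euc d)} (base : Set (Euc d))
    (hbase : base ∈ boundedGaps C)
    (h : ∀ ε : ℝ, 0 < ε → ∃ p ∈ base,
      EMetric.infEdist p
        ((⋃₀ {G' | G' ∈ boundedGaps C ∧ G' ≠ base ∧ EMetric.diam base ≤ EMetric.diam G'})
          ∪ unboundedGapsUnion C) ≤ ENNReal.ofReal ε) :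
    thickness C = 0 := by
  set Uset := (⋃₀ {G' | G' ∈ boundedGaps C ∧ G' ≠ base ∧
      EMetric.diam base ≤ EMetric.diam G'}) ∪ unboundedGapsUnion C with hUset
  have hsd : setEDist base Uset = 0 := by
    refine le_antisymm ?_ zero_le
    refine ENNReal.le_of_forall_pos_le_add fun ε hε _ => ?_
    obtain ⟨p, hp, hle⟩ := h ε (by exact_mod_cast hε)
    calc setEDist base Uset ≤ EMetric.infEdist p Uset := by
          rw [setEDist]; exact iInf₂_le p hp
      _ ≤ ENNReal.ofReal ε := hle
      _ ≤ 0 + (ε : ℝ≥0∞) := by rw [zero_add, ENNReal.ofReal_coe_nnreal]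
  rw [thickness, if_pos ⟨base, hbase⟩]
  refine le_antisymm (le_trans (iInf₂_le base hbase) ?_) zero_le
  rw [← hUset, hsd, ENNReal.zero_div]

/-- A compact set of positive thickness has, for any finite sets of forbidden values,
a point all of whose coordinates avoid them. -/
lemma avoid (hd : 0 < d) {C : Set (Euc d)} (hC : IsCompact C)
    (hτ : 0 < thickness C) (A : Fin d → Finset ℝ) :
    ∃ y ∈ C, ∀ i, y i ∉ A i := by
  by_cases hbg : (boundedGaps C).Nonempty
  · by_contra hcon
    push_neg at hcon
    -- every point of C has some coordinate in A
    obtain ⟨G, hGmem⟩ := hbg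
    have hGmem' := hGmem
    obtain ⟨hGgap, hGbdd⟩ := hGmem
    obtain ⟨xG, hxGc, rfl⟩ := hGgap
    set G : Set (Euc d) := {y | JoinedIn Cᶜ xG y} with hGdef
    have hCc : IsOpen Cᶜ := hC.isClosed.isOpen_compl
    have hGopen : IsOpen G := hCc.pathComponentIn xG
    have hGne : G.Nonempty := ⟨xG, JoinedIn.refl hxGc⟩
    obtain ⟨y₀, hy₀G, hy₀⟩ := ball_avoid hGopen hGne A
    set i₀ : Fin d := ⟨0, hd⟩
    set e : Euc d := EuclideanSpace.single i₀ (1 : ℝ) with hedef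
    set ρ : ℝ → Euc d := fun t => y₀ + t • e with hρdef
    have hρ0 : ρ 0 = y₀ := by simp [hρdef]
    have hρcoord : ∀ t : ℝ, ∀ i : Fin d, (ρ t) i = y₀ i + t * (if i = i₀ then 1 else 0) := by
      intro t i
      simp [hρdef, hedef, EuclideanSpace.single_apply]
    set S : Set ℝ := {t | y₀ i₀ + t ∈ A i₀} with hSdef
    have hSfin : S.Finite := by
      have h : S = (fun t => y₀ i₀ + t) ⁻¹' (A i₀ : Set ℝ) := rfl
      rw [h]
      exact Set.Finite.preimage (add_right_injective _).injOn (A i₀).finite_toSet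
    have h0S : (0 : ℝ) ∉ S := by
      intro h0
      exact hy₀ i₀ (by simpa [hSdef] using h0)
    have hρc : ∀ t : ℝ, t ∉ S → ρ t ∈ Cᶜ := by
      intro t htS htC
      obtain ⟨i, hi⟩ := hcon _ (by simpa using htC)
      by_cases h : i = i₀
      · subst h
        rw [hρcoord] at hi
        simp only [eq_self_iff_true, if_true, mul_one] at hi
        exact htS hi
      · rw [hρcoord] at hi
        simp only [if_neg h, mul_zero, add_zero] at hi
        exact hy₀ i hi
    have hdistρ : ∀ a b : ℝ, dist (ρ a) (ρ b) = |a - b| := by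
      intro a b
      rw [dist_eq_norm]
      have : ρ a - ρ b = (a - b) • e := by
        simp only [hρdef]
        module
      rw [this, norm_smul, hedef, EuclideanSpace.norm_single, norm_one, mul_one,
        Real.norm_eq_abs]
    have hsegjoin : ∀ a b : ℝ, a ≤ b → (∀ u, a ≤ u → u ≤ b → u ∉ S) →
        JoinedIn Cᶜ (ρ a) (ρ b) := by
      intro a b hab hS
      have hsub : segment ℝ (ρ a) (ρ b) ⊆ Cᶜ := by
        rintro z hz
        rw [segment_eq_image] at hz
        obtain ⟨θ, hθ, rfl⟩ := hz
        have hform : (1 - θ) • ρ a + θ • ρ b = ρ ((1 - θ) * a + θ * b) := by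
          simp only [hρdef]
          module
        show (1 - θ) • ρ a + θ • ρ b ∈ Cᶜ
        rw [hform]
        refine hρc _ (hS _ ?_ ?_)
        · nlinarith [hθ.1, hθ.2]
        · nlinarith [hθ.1, hθ.2]
      exact (((convex_segment (ρ a) (ρ b)).isPathConnected
        ⟨ρ a, left_mem_segment _ _ _⟩).joinedIn _ (left_mem_segment _ _ _)
          _ (right_mem_segment _ _ _)).mono hsub
    -- find T beyond the bounded gap G
    obtain ⟨R, hR⟩ := hGbdd.subset_closedBall 0
    have hcoord_le : ∀ (z : Euc d) (i : Fin d), |z i| ≤ ‖z‖ := by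
      intro z i
      rw [EuclideanSpace.norm_eq]
      rw [← Real.sqrt_sq_eq_abs]
      refine Real.sqrt_le_sqrt ?_
      refine Finset.single_le_sum (f := fun j => ‖z j‖ ^ 2) ?_ (Finset.mem_univ i) |>.trans_eq rfl
        |>.trans_eq' ?_
      · intro j _
        positivity
      · rw [Real.norm_eq_abs, sq_abs]
    obtain ⟨T, hT⟩ := ((Set.Ioi_infinite (|y₀ i₀| + |R| + 1)).diff hSfin).nonempty
    have hTS : T ∉ S := hT.2
    have hTbig : |y₀ i₀| + |R| + 1 < T := hT.1
    have hTpos : 0 ≤ T := by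
      have := abs_nonneg (y₀ i₀); have := abs_nonneg R; linarith
    have hρT : ρ T ∉ G := by
      intro hmem
      have h1 : ‖ρ T‖ ≤ R := by
        have := hR hmem
        simpa [Metric.mem_closedBall] using this
      have h2 : |(ρ T) i₀| ≤ ‖ρ T‖ := hcoord_le _ _
      rw [hρcoord] at h2
      simp only [eq_self_iff_true, if_true, mul_one] at h2
      have h3 : y₀ i₀ + T ≤ R := le_trans (le_abs_self _) (h2.trans h1)
      have h4 : -(|y₀ i₀|) ≤ y₀ i₀ := neg_abs_le _
      have h5 : R ≤ |R| := le_abs_self _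
      linarith
    set N : Set ℝ := {t | 0 ≤ t ∧ t ∉ S ∧ ρ t ∉ G} with hNdef
    have hTN : T ∈ N := ⟨hTpos, hTS, hρT⟩
    have hNne : N.Nonempty := ⟨T, hTN⟩
    have hNbdd : BddBelow N := ⟨0, fun t ht => ht.1⟩
    set s : ℝ := sInf N with hsdef
    have hs0 : 0 ≤ s := le_csInf hNne fun t ht => ht.1
    have hnotN : ∀ t, 0 ≤ t → t ∉ S → t < s → ρ t ∈ G := by
      intro t h0 hS hlt
      by_contra hG
      exact absurd (csInf_le hNbdd ⟨h0, hS, hG⟩) (not_le.mpr hlt)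
    have hsS : s ∈ S := by
      by_contra hsS
      obtain ⟨δ₁, hδ₁pos, hball₁⟩ := Metric.isOpen_iff.mp hSfin.isClosed.isOpen_compl s hsS
      by_cases hG : ρ s ∈ G
      · obtain ⟨δ₂, hδ₂pos, hball₂⟩ := Metric.isOpen_iff.mp hGopen (ρ s) hG
        have hlt : sInf N < s + min δ₁ δ₂ := by
          rw [← hsdef]
          have : 0 < min δ₁ δ₂ := lt_min hδ₁pos hδ₂pos
          linarith
        obtain ⟨t, htN, htlt⟩ := exists_lt_of_csInf_lt hNne hlt
        have hts : s ≤ t := hsdef ▸ csInf_le hNbdd htN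
        have : ρ t ∈ G := by
          refine hball₂ ?_
          rw [Metric.mem_ball, hdistρ]
          rw [abs_of_nonneg (by linarith)]
          exact lt_of_lt_of_le (by linarith) (min_le_right _ _)
        exact htN.2.2 this
      · have hspos : 0 < s := by
          rcases hs0.lt_or_eq with h | h
          · exact h
          · exact absurd (by rw [← h, hρ0]; exact hy₀G) hG
        set t : ℝ := max (s - δ₁ / 2) (s / 2) with htdef
        have ht1 : 0 < t := lt_of_lt_of_le (by linarith) (le_max_right _ _)
        have ht2 : t < s := max_lt (by linarith) (by linarith)
        have ht3 : s - δ₁ < t := lt_of_lt_of_le (by linarith) (le_max_left _ _)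
        have htS : ∀ u, t ≤ u → u ≤ s → u ∉ S := by
          intro u hu1 hu2 hu
          refine hball₁ ?_ hu
          rw [Metric.mem_ball, Real.dist_eq, abs_of_nonpos (by linarith)]
          linarith
        have hjoin := hsegjoin t s ht2.le htS
        have htG : ρ t ∈ G := hnotN t ht1.le (htS t le_rfl ht2.le) ht2
        have htG' : JoinedIn Cᶜ xG (ρ t) := htG
        exact hG (htG'.trans hjoin)
    have hspos : 0 < s := by
      rcases hs0.lt_or_eq with h | h
      · exact h
      · exact absurd (by simpa [hSdef] using (h ▸ hsS : (0:ℝ) ∈ S)) (hy₀ i₀)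
    -- find δ isolating s in S
    have hS'fin : (S \ {s}).Finite := hSfin.diff
    have hsS' : s ∉ S \ {s} := fun h => h.2 rfl
    obtain ⟨δ₁, hδ₁pos, hball₁⟩ :=
      Metric.isOpen_iff.mp hS'fin.isClosed.isOpen_compl s hsS'
    set δ : ℝ := min δ₁ s with hδdef
    have hδpos : 0 < δ := lt_min hδ₁pos hspos
    have hδs : δ ≤ s := min_le_right _ _
    have hnoS : ∀ u : ℝ, u ≠ s → |u - s| < δ → u ∉ S := by
      intro u hne habs hu
      refine hball₁ ?_ ⟨hu, hne⟩
      rw [Metric.mem_ball, Real.dist_eq]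
      exact lt_of_lt_of_le habs (min_le_left _ _)
    have hbelowG : ∀ ε : ℝ, 0 < ε → ε < δ → ρ (s - ε) ∈ G := by
      intro ε h1 h2
      refine hnotN _ (by linarith) (hnoS _ (by linarith) (by rw [abs_of_nonpos] <;> linarith)) (by linarith)
    have habove_notG : ∀ ε : ℝ, 0 < ε → ε < δ → ρ (s + ε) ∉ G := by
      intro ε h1 h2 hmem
      have hlt : sInf N < s + ε := by rw [← hsdef]; linarith
      obtain ⟨t, htN, htlt⟩ := exists_lt_of_csInf_lt hNne hlt
      have hts : s ≤ t := hsdef ▸ csInf_le hNbdd htN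
      have htne : t ≠ s := fun h => htN.2.1 (h ▸ hsS)
      have hts' : s < t := lt_of_le_of_ne hts (Ne.symm htne)
      have hjoin := hsegjoin t (s + ε) htlt.le (by
        intro u hu1 hu2
        exact hnoS u (by linarith) (by rw [abs_of_nonneg] <;> linarith))
      have hmem' : JoinedIn Cᶜ xG (ρ (s + ε)) := hmem
      exact htN.2.2 (hmem'.trans hjoin.symm)
    have habove_join : ∀ ε ε' : ℝ, 0 < ε → ε < δ → 0 < ε' → ε' < δ →
        JoinedIn Cᶜ (ρ (s + ε)) (ρ (s + ε')) := by
      intro ε ε' h1 h2 h3 h4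
      rcases le_total ε ε' with h | h
      · exact hsegjoin (s + ε) (s + ε') (by linarith) (by
          intro u hu1 hu2
          exact hnoS u (by linarith) (by rw [abs_of_nonneg] <;> linarith))
      · exact (hsegjoin (s + ε') (s + ε) (by linarith) (by
          intro u hu1 hu2
          exact hnoS u (by linarith) (by rw [abs_of_nonneg] <;> linarith))).symm
    set x₂ : Euc d := ρ (s + δ / 2) with hx₂def
    have hx₂S : s + δ / 2 ∉ S := hnoS _ (by linarith) (by rw [abs_of_nonneg] <;> linarith)
    have hx₂C : x₂ ∈ Cᶜ := hρc _ hx₂S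
    set G₂ : Set (Euc d) := {w | JoinedIn Cᶜ x₂ w} with hG₂def
    have hG₂gap : IsGap C G₂ := ⟨x₂, hx₂C, rfl⟩
    have habove_G₂ : ∀ ε : ℝ, 0 < ε → ε < δ → ρ (s + ε) ∈ G₂ := by
      intro ε h1 h2
      exact habove_join (δ / 2) ε (by linarith) (by linarith) h1 h2
    have hG₂ne : G₂ ≠ G := by
      intro h
      have hx₂G₂ : x₂ ∈ G₂ := JoinedIn.refl hx₂C
      rw [h] at hx₂G₂
      exact habove_notG (δ / 2) (by linarith) (by linarith) hx₂G₂
    have hGneG₂ : G ≠ G₂ := Ne.symm hG₂ne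
    have hedist : ∀ ε : ℝ, 0 < ε → edist (ρ (s - ε)) (ρ (s + ε)) = ENNReal.ofReal (2 * ε) := by
      intro ε h1
      rw [edist_dist, hdistρ]
      congr 1
      rw [show s - ε - (s + ε) = -(2 * ε) by ring, abs_neg, abs_of_nonneg (by linarith)]
    have hzero : thickness C = 0 := by
      by_cases hB2 : Bornology.IsBounded G₂
      · have hG₂bg : G₂ ∈ boundedGaps C := ⟨hG₂gap, hB2⟩
        rcases le_total (EMetric.diam G) (EMetric.diam G₂) with hle | hle
        · refine thickness_eq_zero_of G hGmem' ?_
          intro ε hε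
          set ε' : ℝ := min (δ / 2) (ε / 2) with hε'def
          have hε'1 : 0 < ε' := lt_min (by linarith) (by linarith)
          have hε'2 : ε' < δ := lt_of_le_of_lt (min_le_left _ _) (by linarith)
          refine ⟨ρ (s - ε'), hbelowG ε' hε'1 hε'2, ?_⟩
          have hmemU : ρ (s + ε') ∈
              (⋃₀ {G' | G' ∈ boundedGaps C ∧ G' ≠ G ∧ EMetric.diam G ≤ EMetric.diam G'})
                ∪ unboundedGapsUnion C :=
            Set.mem_union_left _ ⟨G₂, ⟨hG₂bg, hG₂ne, hle⟩, habove_G₂ ε' hε'1 hε'2⟩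
          refine le_trans (EMetric.infEdist_le_edist_of_mem hmemU) ?_
          rw [hedist ε' hε'1]
          exact ENNReal.ofReal_le_ofReal (by
            have := min_le_right (δ / 2) (ε / 2)
            linarith)
        · refine thickness_eq_zero_of G₂ hG₂bg ?_
          intro ε hε
          set ε' : ℝ := min (δ / 2) (ε / 2) with hε'def
          have hε'1 : 0 < ε' := lt_min (by linarith) (by linarith)
          have hε'2 : ε' < δ := lt_of_le_of_lt (min_le_left _ _) (by linarith)
          refine ⟨ρ (s + ε'), habove_G₂ ε' hε'1 hε'2, ?_⟩
          have hmemU : ρ (s - ε') ∈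
              (⋃₀ {G' | G' ∈ boundedGaps C ∧ G' ≠ G₂ ∧ EMetric.diam G₂ ≤ EMetric.diam G'})
                ∪ unboundedGapsUnion C :=
            Set.mem_union_left _ ⟨G, ⟨hGmem', hGneG₂, hle⟩, hbelowG ε' hε'1 hε'2⟩
          refine le_trans (EMetric.infEdist_le_edist_of_mem hmemU) ?_
          rw [edist_comm, hedist ε' hε'1]
          exact ENNReal.ofReal_le_ofReal (by
            have := min_le_right (δ / 2) (ε / 2)
            linarith)
      · refine thickness_eq_zero_of G hGmem' ?_
        intro ε hε
        set ε' : ℝ := min (δ / 2) (ε / 2) with hε'def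
        have hε'1 : 0 < ε' := lt_min (by linarith) (by linarith)
        have hε'2 : ε' < δ := lt_of_le_of_lt (min_le_left _ _) (by linarith)
        refine ⟨ρ (s - ε'), hbelowG ε' hε'1 hε'2, ?_⟩
        have hmemU : ρ (s + ε') ∈
            (⋃₀ {G' | G' ∈ boundedGaps C ∧ G' ≠ G ∧ EMetric.diam G ≤ EMetric.diam G'})
              ∪ unboundedGapsUnion C :=
          Set.mem_union_right _ ⟨G₂, ⟨hG₂gap, hB2⟩, habove_G₂ ε' hε'1 hε'2⟩
        refine le_trans (EMetric.infEdist_le_edist_of_mem hmemU) ?_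
        rw [hedist ε' hε'1]
        exact ENNReal.ofReal_le_ofReal (by
          have := min_le_right (δ / 2) (ε / 2)
          linarith)
    rw [hzero] at hτ
    exact lt_irrefl 0 hτ
  · rw [thickness, if_neg hbg] at hτ
    by_cases hint : (interior C).Nonempty
    · obtain ⟨y, hyU, hyA⟩ := ball_avoid isOpen_interior hint A
      exact ⟨y, interior_subset hyU, hyA⟩
    · rw [if_neg hint] at hτ
      exact absurd hτ (lt_irrefl 0)


/-- Iteratively extend a family of pairs with pairwise distinct coordinates. -/
lemma exists_chain (hd : 0 < d) {C₁ C₂ : Set (Euc d)}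
    (h₁ : IsCompact C₁) (h₂ : IsCompact C₂)
    (hτ₁ : 0 < thickness C₁) (hτ₂ : 0 < thickness C₂)
    (y1 z1 : Euc d) (hy1 : y1 ∈ C₁) (hz1 : z1 ∈ C₂) (m : ℕ) :
    ∃ q : Fin (m + 1) → Euc d × Euc d, q 0 = (y1, z1) ∧
      (∀ j, (q j).1 ∈ C₁ ∧ (q j).2 ∈ C₂) ∧
      ∀ (i : Fin d) (j k : Fin (m + 1)), j ≠ k →
        (q j).1 i ≠ (q k).1 i ∧ (q j).2 i ≠ (q k).2 i := by
  induction m with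
  | zero =>
    refine ⟨fun _ => (y1, z1), rfl, fun _ => ⟨hy1, hz1⟩, ?_⟩
    intro i j k hjk
    exfalso
    apply hjk
    apply Fin.ext
    have h1 := j.isLt
    have h2 := k.isLt
    omega
  | succ m ih =>
    obtain ⟨q, hq0, hqmem, hqdist⟩ := ih
    obtain ⟨ynew, hynewC, hynew⟩ := avoid hd h₁ hτ₁
      (fun i => Finset.image (fun j => (q j).1 i) Finset.univ)
    obtain ⟨znew, hznewC, hznew⟩ := avoid hd h₂ hτ₂
      (fun i => Finset.image (fun j => (q j).2 i) Finset.univ)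
    refine ⟨Fin.snoc q (ynew, znew), ?_, ?_, ?_⟩
    · rw [show (0 : Fin (m + 1 + 1)) = Fin.castSucc 0 from rfl, Fin.snoc_castSucc, hq0]
    · intro j
      induction j using Fin.lastCases with
      | last => rw [Fin.snoc_last]; exact ⟨hynewC, hznewC⟩
      | cast j => rw [Fin.snoc_castSucc]; exact hqmem j
    · intro i j k hjk
      induction j using Fin.lastCases with
      | last =>
        induction k using Fin.lastCases with
        | last => exact absurd rfl hjk
        | cast k =>
          rw [Fin.snoc_last, Fin.snoc_castSucc]
          constructor
          · intro h
            apply hynew i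
            have h' : ynew i = (q k).1 i := h
            rw [h']
            exact Finset.mem_image_of_mem _ (Finset.mem_univ k)
          · intro h
            apply hznew i
            have h' : znew i = (q k).2 i := h
            rw [h']
            exact Finset.mem_image_of_mem _ (Finset.mem_univ k)
      | cast j =>
        induction k using Fin.lastCases with
        | last =>
          rw [Fin.snoc_castSucc, Fin.snoc_last]
          constructor
          · intro h
            apply hynew i
            have h' : ynew i = (q j).1 i := h.symm
            rw [h']
            exact Finset.mem_image_of_mem _ (Finset.mem_univ j)
          · intro h
            apply hznew i
            have h' : znew i = (q j).2 i := h.symm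
            rw [h']
            exact Finset.mem_image_of_mem _ (Finset.mem_univ j)
        | cast k =>
          rw [Fin.snoc_castSucc, Fin.snoc_castSucc]
          exact hqdist i j k (fun h => hjk (by rw [h]))

end Aux

/-- If `C₁, C₂ ⊆ ℝ^d` are compact with positive thickness, then given any
`x1 ∈ C₁ × C₂` and `n ≥ 2` one can find `x², …, xⁿ ∈ C₁ × C₂` such that in each of the
`2d` coordinates, the values of the `n` points are pairwise distinct. -/
theorem exists_points_no_shared_coordinates
    {d : ℕ} (C₁ C₂ : Set (Euc d)) (h₁ : IsCompact C₁) (h₂ : IsCompact C₂)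
    (hτ₁ : 0 < thickness C₁) (hτ₂ : 0 < thickness C₂)
    (x1 : Euc (2 * d)) (hx : x1 ∈ setProd C₁ C₂) (n : ℕ) (hn : 2 ≤ n) :
    ∃ p : Fin n → Euc (2 * d), p ⟨0, by omega⟩ = x1 ∧
      (∀ j, p j ∈ setProd C₁ C₂) ∧
      ∀ (i : Fin (2 * d)) (j k : Fin n), j ≠ k → p j i ≠ p k i := by
  obtain ⟨y1, hy1, z1, hz1, hx1⟩ := hx
  by_cases hd : 0 < d
  · obtain ⟨q, hq0, hqmem, hqdist⟩ :=
      exists_chain hd h₁ h₂ hτ₁ hτ₂ y1 z1 hy1 hz1 (n - 1)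
    have hn1 : n - 1 + 1 = n := by omega
    refine ⟨fun j => pairPoint (q (Fin.cast hn1.symm j)).1 (q (Fin.cast hn1.symm j)).2,
      ?_, ?_, ?_⟩
    · exact (congrArg (fun v : Euc d × Euc d => pairPoint v.1 v.2) hq0).trans hx1.symm
    · intro j
      exact ⟨_, (hqmem _).1, _, (hqmem _).2, rfl⟩
    · intro i j k hjk
      have hne : Fin.cast hn1.symm j ≠ Fin.cast hn1.symm k := by
        intro h
        exact hjk (Fin.cast_injective hn1.symm h)
      by_cases h : (i : ℕ) < d
      · simp only [pairPoint, dif_pos h]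
        exact (hqdist ⟨(i : ℕ), h⟩ _ _ hne).1
      · simp only [pairPoint, dif_neg h]
        exact (hqdist _ _ _ hne).2
  · have hd0 : d = 0 := by omega
    refine ⟨fun _ => x1, rfl, fun _ => ⟨y1, hy1, z1, hz1, hx1⟩, fun i => ?_⟩
    exact absurd i.isLt (by omega)


end
end
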